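/- Let w be a nontrivial solution of the Airy equation w'' = z·w, real on the real axis, with w(0)·w'(0) = 0 but w not identically zero, and let α = r·e^{iφ}, r > 0, 0 < φ < π, be a non-real zero of w with w(ᾱ) = 0. Then φ = π/3 or φ = 2π/3. -/

import Mathlib

open Complex Real

private lemma key_deriv (w : ℂ → ℂ) (hw : Differentiable ℂ w) (c : ℂ) (t : ℝ) :
    HasDerivAt (fun s : ℝ => w (c * s)) (c * deriv w (c * t)) t := by
  have h1 : HasDerivAt (fun s : ℝ => c * (s : ℂ)) c t := by
    simpa using (Complex.ofRealCLM.hasDerivAt (x := t)).const_mul c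
  have h2 := ((hw (c * t)).hasDerivAt).complexToReal_fderiv
  have h3 := h2.comp_hasDerivAt t h1
  simp [mul_comm] at h3
  exact h3


private lemma entire_zero_of_segment {w : ℂ → ℂ} (hw : Differentiable ℂ w)
    {α : ℂ} (hα : α ≠ 0) (h : ∀ t : ℝ, t ∈ Set.Ioo (0:ℝ) 1 → w (α * t) = 0) :
    w = 0 := by
  have hana : AnalyticOnNhd ℂ w Set.univ := analyticOnNhd_univ_iff_differentiable.2 hw
  set u : ℕ → ℝ := fun n => 1/2 + (1/3) * (1/2)^n with hu_def
  have hu_mem : ∀ n, u n ∈ Set.Ioo (0:ℝ) 1 := by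
    intro n
    have h1 : (0:ℝ) < (1/2)^n := by positivity
    have h2 : ((1:ℝ)/2)^n ≤ 1 := pow_le_one₀ (by norm_num) (by norm_num)
    constructor
    · simp only [hu_def]; nlinarith
    · simp only [hu_def]; nlinarith
  have hu_ne : ∀ n, u n ≠ 1/2 := by
    intro n
    have h1 : (0:ℝ) < (1/2)^n := by positivity
    simp only [hu_def]
    intro hcon
    nlinarith
  have hpow : Filter.Tendsto (fun n : ℕ => ((1:ℝ)/2)^n) Filter.atTop (nhds 0) :=
    tendsto_pow_atTop_nhds_zero_of_lt_one (by norm_num) (by norm_num)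
  have hu_tend : Filter.Tendsto u Filter.atTop (nhds (1/2)) := by
    have h1 := (hpow.const_mul ((1:ℝ)/3)).const_add ((1:ℝ)/2)
    have h2 : (1:ℝ)/2 + 1/3 * 0 = 1/2 := by norm_num
    rw [h2] at h1
    exact h1
  set z₀ : ℂ := α * (((1:ℝ)/2 : ℝ) : ℂ) with hz₀
  have htend : Filter.Tendsto (fun n => α * ((u n : ℝ) : ℂ)) Filter.atTop
      (nhdsWithin z₀ {z₀}ᶜ) := by
    apply tendsto_nhdsWithin_of_tendsto_nhds_of_eventually_within
    · exact ((continuous_const.mul Complex.continuous_ofReal).tendsto ((1:ℝ)/2)).comp hu_tend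
    · apply Filter.Eventually.of_forall
      intro n
      simp only [Set.mem_compl_iff, Set.mem_singleton_iff, hz₀]
      intro hcon
      have h1 := mul_left_cancel₀ hα hcon
      exact hu_ne n (Complex.ofReal_injective h1)
  have hfreq : ∃ᶠ z in nhdsWithin z₀ {z₀}ᶜ, w z = 0 := by
    apply htend.frequently
    exact Filter.Frequently.of_forall fun n => h (u n) (hu_mem n)
  have := hana.eqOn_zero_of_preconnected_of_frequently_eq_zero
    isPreconnected_univ (Set.mem_univ z₀) hfreq
  exact funext fun z => this (Set.mem_univ z)

theorem nonreal_zero_on_rays (w : ℂ → ℂ)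
    (hw : Differentiable ℂ w) (hw' : Differentiable ℂ (deriv w))
    (hairy : ∀ z : ℂ, deriv (deriv w) z = z * w z)
    (hreal : ∀ x : ℂ, w (starRingEnd ℂ x) = starRingEnd ℂ (w x))
    (hnontriv : w ≠ 0) (h0 : w 0 * deriv w 0 = 0)
    (r φ : ℝ) (hr : 0 < r) (hφ₁ : 0 < φ) (hφ₂ : φ < Real.pi)
    (α : ℂ) (hα : α = r * Complex.exp (φ * Complex.I))
    (hz : w α = 0) (hz' : w (starRingEnd ℂ α) = 0) :
    φ = Real.pi / 3 ∨ φ = 2 * Real.pi / 3 := by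
  set β : ℂ := starRingEnd ℂ α with hβ
  have hαne : α ≠ 0 := by
    rw [hα]
    exact mul_ne_zero (Complex.ofReal_ne_zero.2 hr.ne') (Complex.exp_ne_zero _)
  -- the Wronskian-type function
  set W : ℝ → ℂ := fun t =>
    α * (deriv w (α * t) * w (β * t)) - β * (w (α * t) * deriv w (β * t)) with hWdef
  have hd2 : ∀ (c : ℂ) (t : ℝ),
      HasDerivAt (fun s : ℝ => deriv w (c * s)) (c * ((c * t) * w (c * t))) t := by
    intro c t
    have := key_deriv (deriv w) hw' c t
    rwa [hairy] at this
  have hWd : ∀ t : ℝ,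
      HasDerivAt W ((α ^ 3 - β ^ 3) * t * (w (α * t) * w (β * t))) t := by
    intro t
    have hA := (((hd2 α t).mul (key_deriv w hw β t)).const_mul α).sub
      (((key_deriv w hw α t).mul (hd2 β t)).const_mul β)
    convert hA using 1
    · rfl
    · rfl
    ring
  have hcont : ∀ c : ℂ, Continuous (fun t : ℝ => w (c * t)) := fun c =>
    hw.continuous.comp (by continuity)
  have hcont' : ∀ c : ℂ, Continuous (fun t : ℝ => deriv w (c * t)) := fun c =>
    hw'.continuous.comp (by continuity)
  have hint : ∫ t in (0:ℝ)..1, ((α ^ 3 - β ^ 3) * t * (w (α * t) * w (β * t)))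
      = W 1 - W 0 := by
    apply intervalIntegral.integral_eq_sub_of_hasDerivAt (fun t _ => hWd t)
    apply Continuous.intervalIntegrable
    exact (continuous_const.mul Complex.continuous_ofReal).mul
      ((hcont α).mul (hcont β))
  have hW1 : W 1 = 0 := by
    simp [hWdef, hz, hz']
  have hW0 : W 0 = 0 := by
    simp only [hWdef, Complex.ofReal_zero, mul_zero]
    linear_combination (α - β) * h0
  have hconj : ∀ t : ℝ, w (β * t) = starRingEnd ℂ (w (α * t)) := by
    intro t
    rw [← hreal]
    congr 1
    simp [hβ, Complex.conj_ofReal]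
  -- reduce to a real integral
  have hmain : (α ^ 3 - β ^ 3) *
      ((∫ t in (0:ℝ)..1, t * Complex.normSq (w (α * t)) : ℝ) : ℂ) = 0 := by
    rw [← intervalIntegral.integral_ofReal, ← intervalIntegral.integral_const_mul]
    rw [hW1, hW0, sub_zero] at hint
    rw [← hint]
    apply intervalIntegral.integral_congr
    intro t _
    simp only [hconj, Complex.mul_conj]
    push_cast
    ring
  rcases mul_eq_zero.1 hmain with hfac | hJ
  · -- sin (3φ) = 0
    have him : (α ^ 3).im = 0 := by
      have h1 : β ^ 3 = starRingEnd ℂ (α ^ 3) := by rw [hβ, map_pow]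
      rw [h1, sub_eq_zero] at hfac
      have := Complex.conj_eq_iff_im.1 hfac.symm
      exact this
    have hsin : Real.sin (3 * φ) = 0 := by
      have : (α ^ 3).im = r ^ 3 * Real.sin (3 * φ) := by
        rw [hα, mul_pow, ← Complex.exp_nat_mul,
          show (3:ℕ) * ((φ:ℂ) * Complex.I) = ((3*φ:ℝ):ℂ) * Complex.I by push_cast; ring]
        simp [Complex.exp_im, Complex.mul_im, ← Complex.ofReal_pow]
      rw [this] at him
      have hr3 : (0:ℝ) < r ^ 3 := by positivity
      exact (mul_eq_zero.1 him).resolve_left hr3.ne'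
    obtain ⟨n, hn⟩ := Real.sin_eq_zero_iff.1 hsin
    have hπ : (0:ℝ) < Real.pi := Real.pi_pos
    have hn1 : (0:ℝ) < n * Real.pi := by rw [hn]; positivity
    have hn2 : (n:ℝ) * Real.pi < 3 * Real.pi := by rw [hn]; nlinarith
    have hnpos : 0 < n := by
      by_contra h
      push_neg at h
      have : (n:ℝ) ≤ 0 := by exact_mod_cast h
      nlinarith
    have hnlt : n < 3 := by
      by_contra h
      push_neg at h
      have : (3:ℝ) ≤ (n:ℝ) := by exact_mod_cast h
      nlinarith
    interval_cases n
    · left; push_cast at hn; linarith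
    · right; push_cast at hn; linarith
  · -- the integral is positive: contradiction
    exfalso
    have hJ0 : (∫ t in (0:ℝ)..1, t * Complex.normSq (w (α * t))) = 0 :=
      Complex.ofReal_eq_zero.1 hJ
    -- find a point where w (α t) ≠ 0
    have hex : ∃ t₀ : ℝ, t₀ ∈ Set.Ioo (0:ℝ) 1 ∧ w (α * t₀) ≠ 0 := by
      by_contra h
      push_neg at h
      exact hnontriv (entire_zero_of_segment hw hαne h)
    obtain ⟨t₀, ht₀, hwt₀⟩ := hex
    set f : ℝ → ℝ := fun t => t * Complex.normSq (w (α * t)) with hfdef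
    have hfc : Continuous f := continuous_id.mul (Complex.continuous_normSq.comp (hcont α))
    have hfi : IntervalIntegrable f MeasureTheory.volume 0 1 := hfc.intervalIntegrable _ _
    have hae : 0 ≤ᵐ[MeasureTheory.volume.restrict (Set.uIoc (0:ℝ) 1)] f := by
      rw [Set.uIoc_of_le (by norm_num : (0:ℝ) ≤ 1)]
      filter_upwards [MeasureTheory.ae_restrict_mem measurableSet_Ioc] with x hx
      have hx0 : 0 < x := hx.1
      show (0:ℝ) ≤ x * Complex.normSq (w (α * x))
      exact mul_nonneg hx0.le (Complex.normSq_nonneg _)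
    have hpos : 0 < ∫ t in (0:ℝ)..1, f t := by
      rw [intervalIntegral.integral_pos_iff_support_of_nonneg_ae' hae hfi]
      refine ⟨by norm_num, ?_⟩
      have hopen : IsOpen ({t : ℝ | f t ≠ 0} ∩ Set.Ioo 0 1) :=
        ((isOpen_compl_singleton.preimage hfc).inter isOpen_Ioo)
      have hsub : ({t : ℝ | f t ≠ 0} ∩ Set.Ioo 0 1) ⊆
          Function.support f ∩ Set.Ioc 0 1 := by
        rintro x ⟨hx1, hx2⟩
        exact ⟨hx1, hx2.1, hx2.2.le⟩
      refine lt_of_lt_of_le ?_ (MeasureTheory.measure_mono hsub)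
      apply hopen.measure_pos MeasureTheory.volume
      refine ⟨t₀, ?_, ht₀⟩
      simp only [Set.mem_setOf_eq, hfdef]
      intro hcon
      rcases mul_eq_zero.1 hcon with h | h
      · exact absurd h ht₀.1.ne'
      · exact hwt₀ (Complex.normSq_eq_zero.1 h)
    rw [hJ0] at hpos
    exact lt_irrefl _ hpos
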